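/- For each i = 1,…,N let h_i : ℝ^{m_i} → ℝ be σ_i-strongly convex with σ_i > 0, let A_i be an m_i×n real matrix and b_i ∈ ℝ^{m_i}, and define H(x) = Σ_{i=1}^{N} h_i(A_i x − b_i). Let X = {x ∈ ℝⁿ : Cx ≤ d} be a nonempty polyhedron (C a q×n matrix, d ∈ ℝ^q, inequality componentwise) and let x* ∈ X minimize H over X. Then a point x ∈ X minimizes H over X if and only if A_i x = A_i x* for all i = 1,…,N; equivalently, the solution set satisfies X* = {x ∈ ℝⁿ : Ãx = Ãx*, Cx ≤ d}, where Ã is the matrix obtained by stacking A_1, …, A_N vertically. -/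

import Mathlib

open RealInnerProductSpace

lemma midpoint_strong {E : Type*} [NormedAddCommGroup E] [InnerProductSpace ℝ E]
    (f : E → ℝ) (σ : ℝ)
    (hf : ConvexOn ℝ Set.univ (fun y => f y - σ / 2 * ‖y‖ ^ 2)) (u v : E) :
    f ((1/2:ℝ) • u + (1/2:ℝ) • v) ≤ (f u + f v)/2 - σ/8 * ‖u - v‖^2 := by
  have hcv := hf.2 (Set.mem_univ u) (Set.mem_univ v)
    (by norm_num : (0:ℝ) ≤ 1/2) (by norm_num : (0:ℝ) ≤ 1/2) (by norm_num : (1/2:ℝ)+1/2 = 1)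
  simp only [smul_eq_mul] at hcv
  have h1 : ‖u+v‖^2 = ‖u‖^2 + 2 * inner ℝ u v + ‖v‖^2 := norm_add_sq_real u v
  have h2 : ‖u-v‖^2 = ‖u‖^2 - 2 * inner ℝ u v + ‖v‖^2 := norm_sub_sq_real u v
  have hs : ‖(1/2:ℝ) • u + (1/2:ℝ) • v‖^2 = (1/4) * ‖u+v‖^2 := by
    rw [← smul_add, norm_smul]
    simp [abs_of_nonneg]
    ring
  have key : σ/2 * ‖(1/2:ℝ) • u + (1/2:ℝ) • v‖^2
      = σ/4*‖u‖^2 + σ/4*‖v‖^2 - σ/8*‖u-v‖^2 := by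
    rw [hs, h1, h2]; ring
  linarith

/-- characterization of the solution set of a separable strongly
convex composite over a polyhedron: `x ∈ X` minimizes `H` over `X` iff
`A i x = A i x*` for all `i`.  The polyhedron `X = {x : Cx ≤ d}` is written
with a linear map `C` into `Fin q → ℝ` and componentwise inequalities. -/
theorem separable_strongly_convex_solution_set
    (n N q : ℕ) (m : Fin N → ℕ)
    (h : (i : Fin N) → EuclideanSpace ℝ (Fin (m i)) → ℝ)
    (σ : Fin N → ℝ) (hσ : ∀ i, 0 < σ i)
    (hsc : ∀ i, ConvexOn ℝ Set.univ (fun y => h i y - σ i / 2 * ‖y‖ ^ 2))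
    (A : (i : Fin N) → EuclideanSpace ℝ (Fin n) →ₗ[ℝ] EuclideanSpace ℝ (Fin (m i)))
    (b : (i : Fin N) → EuclideanSpace ℝ (Fin (m i)))
    (C : EuclideanSpace ℝ (Fin n) →ₗ[ℝ] (Fin q → ℝ)) (d : Fin q → ℝ)
    (X : Set (EuclideanSpace ℝ (Fin n)))
    (hX : X = {x | ∀ j, C x j ≤ d j})
    (hXne : X.Nonempty)
    (xstar : EuclideanSpace ℝ (Fin n)) (hxstar : xstar ∈ X)
    (hmin : ∀ x ∈ X,
      (∑ i, h i (A i xstar - b i)) ≤ ∑ i, h i (A i x - b i)) :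
    ∀ x ∈ X,
      ((∀ y ∈ X, (∑ i, h i (A i x - b i)) ≤ ∑ i, h i (A i y - b i)) ↔
        ∀ i, A i x = A i xstar) := by
  intro x hx
  constructor
  · intro hxmin
    -- x and xstar have equal objective value
    have heq : (∑ i, h i (A i x - b i)) = ∑ i, h i (A i xstar - b i) :=
      le_antisymm (hxmin xstar hxstar) (hmin x hx)
    -- midpoint
    set z := (1/2:ℝ) • x + (1/2:ℝ) • xstar with hz
    have hzX : z ∈ X := by
      rw [hX]; intro j
      have hx' : C x j ≤ d j := by rw [hX] at hx; exact hx j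
      have hxs' : C xstar j ≤ d j := by rw [hX] at hxstar; exact hxstar j
      have : C z j = (1/2:ℝ) * C x j + (1/2:ℝ) * C xstar j := by
        simp [hz, map_add, map_smul]
      rw [this]; linarith
    have hmid : ∀ i, h i (A i z - b i) ≤
        (h i (A i x - b i) + h i (A i xstar - b i))/2
          - σ i/8 * ‖A i x - A i xstar‖^2 := by
      intro i
      have hAz : A i z - b i = (1/2:ℝ) • (A i x - b i) + (1/2:ℝ) • (A i xstar - b i) := by
        simp only [hz, map_add, map_smul, smul_sub]
        module
      have hsub : (A i x - b i) - (A i xstar - b i) = A i x - A i xstar := by abel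
      have := midpoint_strong (h i) (σ i) (hsc i) (A i x - b i) (A i xstar - b i)
      rw [hsub] at this
      rw [hAz]
      exact this
    have hsum : (∑ i, h i (A i z - b i)) ≤
        (∑ i, ((h i (A i x - b i) + h i (A i xstar - b i))/2
          - σ i/8 * ‖A i x - A i xstar‖^2)) :=
      Finset.sum_le_sum (fun i _ => hmid i)
    rw [Finset.sum_sub_distrib] at hsum
    have hsplit : (∑ i, (h i (A i x - b i) + h i (A i xstar - b i))/2)
        = ((∑ i, h i (A i x - b i)) + ∑ i, h i (A i xstar - b i))/2 := by
      rw [← Finset.sum_add_distrib, Finset.sum_div]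
    have hlb := hmin z hzX
    have hS : (∑ i, σ i/8 * ‖A i x - A i xstar‖^2) ≤ 0 := by
      rw [hsplit, heq] at hsum
      linarith
    have hterm : ∀ i ∈ Finset.univ, (0:ℝ) ≤ σ i/8 * ‖A i x - A i xstar‖^2 := by
      intro i _
      have := hσ i
      positivity
    have hzero : ∀ i ∈ Finset.univ, σ i/8 * ‖A i x - A i xstar‖^2 = 0 := by
      have := le_antisymm hS (Finset.sum_nonneg hterm)
      exact (Finset.sum_eq_zero_iff_of_nonneg hterm).mp this
    intro i
    have hi := hzero i (Finset.mem_univ i)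
    have hσi : σ i / 8 ≠ 0 := by have := hσ i; positivity
    have : ‖A i x - A i xstar‖^2 = 0 := by
      rcases mul_eq_zero.mp hi with h' | h'
      · exact absurd h' hσi
      · exact h'
    have : ‖A i x - A i xstar‖ = 0 := by
      exact pow_eq_zero_iff (by norm_num) |>.mp this
    have := norm_eq_zero.mp this
    exact sub_eq_zero.mp this
  · intro hA y hy
    have : (∑ i, h i (A i x - b i)) = ∑ i, h i (A i xstar - b i) := by
      apply Finset.sum_congr rfl
      intro i _
      rw [hA i]
    rw [this]
    exact hmin y hy
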